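/- With notation as in the construction: let R = I × J be a standard rectangle and ℓ ≥ 1 with 2^{ℓ+1}|J| ≤ 1. Then there exists exactly one standard rectangle T = W × H intersecting R vertically with p_T ≠ p_R, W ⊂ I_{(ℓ)}, and |W| = 2^{-1}|I_{(ℓ)}|; moreover H = J^{(ℓ+1)}. -/

import Mathlib

open MeasureTheory
open scoped ENNReal

/-- A dyadic interval `[k·2^n, (k+1)·2^n)`. -/
def IsDyadicInterval (I : Set ℝ) : Prop :=
  ∃ k n : ℤ, I = Set.Ico ((k : ℝ) * 2 ^ n) (((k : ℝ) + 1) * 2 ^ n)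

/-- An axis-parallel dyadic rectangle in the plane. -/
def IsDyadicRect (R : Set (ℝ × ℝ)) : Prop :=
  ∃ I J : Set ℝ, IsDyadicInterval I ∧ IsDyadicInterval J ∧ R = I ×ˢ J

def unitSq : Set (ℝ × ℝ) := Set.Ico (0 : ℝ) 1 ×ˢ Set.Ico (0 : ℝ) 1

/-- `T = W × H` intersects `R = I × J` vertically: they intersect nontrivially,
neither contains the other, and `π₁(T) ⊊ π₁(R)`. -/
def VertInt (W H I J : Set ℝ) : Prop :=
  ((W ×ˢ H) ∩ (I ×ˢ J)).Nonempty ∧ ¬ (W ×ˢ H ⊆ I ×ˢ J) ∧ ¬ (I ×ˢ J ⊆ W ×ˢ H) ∧ W ⊂ I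

section Aux

open scoped NNReal

/-- A dyadic interval as a set. -/
def dy (k n : ℤ) : Set ℝ := Set.Ico ((k : ℝ) * 2 ^ n) (((k : ℝ) + 1) * 2 ^ n)

lemma dy_isDyadic (k n : ℤ) : IsDyadicInterval (dy k n) := ⟨k, n, rfl⟩

lemma dy_nonempty (k n : ℤ) : (dy k n).Nonempty := by
  refine ⟨(k:ℝ) * 2^n, le_refl _, ?_⟩
  have h : (0:ℝ) < 2 ^ n := by positivity
  nlinarith

lemma ofReal_two_zpow (n : ℤ) : ENNReal.ofReal ((2:ℝ)^n) = (2:ℝ≥0∞)^n := by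
  rw [show ((2:ℝ)^n) = (((2:ℝ≥0)^n : ℝ≥0) : ℝ) by simp, ENNReal.ofReal_coe_nnreal,
    ENNReal.coe_zpow (by norm_num)]
  norm_num

lemma dy_volume (k n : ℤ) : volume (dy k n) = (2:ℝ≥0∞)^n := by
  rw [dy, Real.volume_Ico, show ((k:ℝ)+1) * 2^n - k * 2^n = 2^n by ring, ofReal_two_zpow]

lemma two_zpow_ne_zero (n : ℤ) : (2:ℝ≥0∞)^n ≠ 0 :=
  (ENNReal.zpow_pos (by norm_num) (by norm_num) n).ne'

lemma two_zpow_ne_top (n : ℤ) : (2:ℝ≥0∞)^n ≠ ⊤ :=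
  (ENNReal.zpow_lt_top (by norm_num) (by norm_num) n).ne

lemma two_zpow_add (a b : ℤ) : (2:ℝ≥0∞)^(a+b) = 2^a * 2^b :=
  ENNReal.zpow_add (by norm_num) (by norm_num) a b

lemma two_zpow_strictMono : StrictMono (fun n : ℤ => (2:ℝ≥0∞)^n) := by
  intro a b hab
  calc (2:ℝ≥0∞)^a = 2^a * 1 := (mul_one _).symm
    _ < 2^a * 2^(b-a) := by
        rw [ENNReal.mul_lt_mul_iff_right (two_zpow_ne_zero a) (two_zpow_ne_top a)]
        calc (1:ℝ≥0∞) = 2^(0:ℤ) := by norm_num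
          _ < 2^(b-a) := by
            have h : (2:ℝ≥0∞)^(1:ℤ) ≤ 2^(b-a) := ENNReal.zpow_le_of_le (by norm_num) (by omega)
            refine lt_of_lt_of_le ?_ h
            norm_num
    _ = 2^b := by rw [← two_zpow_add]; ring_nf

lemma two_zpow_inj : Function.Injective (fun n : ℤ => (2:ℝ≥0∞)^n) :=
  two_zpow_strictMono.injective

lemma vol_prod (s t : Set ℝ) : volume (s ×ˢ t) = volume s * volume t := by
  rw [Measure.volume_eq_prod, Measure.prod_prod]

lemma dy_nested {k n k' n' : ℤ} (hnn : n ≤ n') {x : ℝ}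
    (hx : x ∈ dy k n) (hx' : x ∈ dy k' n') : dy k n ⊆ dy k' n' := by
  obtain ⟨h1, h2⟩ := hx
  obtain ⟨h1', h2'⟩ := hx'
  have h2n : (0:ℝ) < 2 ^ n := by positivity
  set c : ℤ := 2 ^ (n' - n).toNat with hcdef
  have hc : (c : ℝ) * 2 ^ n = 2 ^ n' := by
    have h1c : (c : ℝ) = 2 ^ ((n' - n).toNat : ℤ) := by
      rw [hcdef]; push_cast; rw [zpow_natCast]
    rw [h1c, ← zpow_add₀ (by norm_num : (2:ℝ) ≠ 0)]
    congr 1; omega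
  have e1 : (k:ℝ) < ((k':ℝ) + 1) * c := by
    have hx2 : x < (((k':ℝ) + 1) * c) * 2 ^ n := by
      rw [mul_assoc, hc]; exact h2'
    exact (mul_lt_mul_iff_of_pos_right h2n).mp (lt_of_le_of_lt h1 hx2)
  have e1' : k + 1 ≤ (k' + 1) * c := by
    have h : (k:ℤ) < (k' + 1) * c := by exact_mod_cast e1
    omega
  have e2 : (k':ℝ) * c < (k:ℝ) + 1 := by
    have hx1 : ((k':ℝ) * c) * 2 ^ n ≤ x := by
      rw [mul_assoc, hc]; exact h1'
    exact (mul_lt_mul_iff_of_pos_right h2n).mp (lt_of_le_of_lt hx1 h2)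
  have e2' : k' * c ≤ k := by
    have h : (k':ℤ) * c < k + 1 := by exact_mod_cast e2
    omega
  intro y hy
  obtain ⟨hy1, hy2⟩ := hy
  have e1'' : ((k:ℝ) + 1) ≤ ((k':ℝ) + 1) * c := by exact_mod_cast e1'
  have e2'' : (k':ℝ) * c ≤ (k:ℝ) := by exact_mod_cast e2'
  constructor
  · rw [← hc, ← mul_assoc]
    nlinarith [mul_le_mul_of_nonneg_right e2'' h2n.le]
  · rw [← hc, ← mul_assoc]
    nlinarith [mul_le_mul_of_nonneg_right e1'' h2n.le]

lemma dy_eq_of_mem {k n k' : ℤ} {x : ℝ} (hx : x ∈ dy k n) (hx' : x ∈ dy k' n) :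
    dy k n = dy k' n :=
  Set.Subset.antisymm (dy_nested le_rfl hx hx') (dy_nested le_rfl hx' hx)

lemma dy_half {k n : ℤ} {x : ℝ} (hx : x ∈ dy k n) :
    ∃ k', x ∈ dy k' (n - 1) ∧ dy k' (n - 1) ⊆ dy k n := by
  have h2 : (2:ℝ) ^ n = 2 * 2 ^ (n - 1) := by
    rw [show n = 1 + (n - 1) by omega, zpow_add₀ (by norm_num : (2:ℝ) ≠ 0)]
    norm_num
  obtain ⟨h1, h2'⟩ := hx
  have key : (k:ℝ) * 2 ^ n = 2 * (k:ℝ) * 2 ^ (n - 1) := by rw [h2]; ring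
  have key2 : ((k:ℝ) + 1) * 2 ^ n = (2 * (k:ℝ) + 1 + 1) * 2 ^ (n - 1) := by rw [h2]; ring
  by_cases hlt : x < ((2 * (k:ℝ)) + 1) * 2 ^ (n - 1)
  · refine ⟨2 * k, ⟨?_, ?_⟩, ?_⟩
    · push_cast; linarith
    · push_cast; linarith
    · exact dy_nested (by omega) ⟨by push_cast; linarith, by push_cast; linarith⟩ ⟨h1, h2'⟩
  · push_neg at hlt
    refine ⟨2 * k + 1, ⟨?_, ?_⟩, ?_⟩
    · push_cast; linarith
    · push_cast; linarith
    · exact dy_nested (by omega) ⟨by push_cast; linarith, by push_cast; linarith⟩ ⟨h1, h2'⟩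

lemma unit_eq_dy : Set.Ico (0:ℝ) 1 = dy 0 0 := by
  simp [dy]

end Aux

/-- Lemma (findMaximalRectangles): for a standard rectangle `R = I × J` and `ℓ ≥ 1`
with `2^{ℓ+1}|J| ≤ 1`, there is exactly one standard rectangle `T = W × H`
intersecting `R` vertically with `p_T ≠ p_R`, `W ⊂ I_{(ℓ)}` and `|W| = 2^{-1}|I_{(ℓ)}|`;
moreover `H = J^{(ℓ+1)}`. -/
theorem stmt13 (m : ℕ) (P : Finset (ℝ × ℝ))
    (hPsub : (↑P : Set (ℝ × ℝ)) ⊆ unitSq)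
    (hP1 : ∀ R : Set (ℝ × ℝ), IsDyadicRect R → R ⊆ unitSq →
      volume R = (2 : ℝ≥0∞) ^ (-(2 * (m : ℤ)) - 1) → ∃! q, q ∈ P ∧ q ∈ R)
    (hP2 : ∀ p ∈ P, ∀ q ∈ P, p ≠ q → ∀ R : Set (ℝ × ℝ), IsDyadicRect R →
      p ∈ R → q ∈ R → (2 : ℝ≥0∞) ^ (-(2 * (m : ℤ))) ≤ volume R)
    (I J : Set ℝ) (hI : IsDyadicInterval I) (hJ : IsDyadicInterval J)
    (hRsub : I ×ˢ J ⊆ unitSq)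
    (hRvol : volume (I ×ˢ J) = (2 : ℝ≥0∞) ^ (-(2 * (m : ℤ)) - 2))
    (p : ℝ × ℝ) (hpP : p ∈ P) (hpR : p ∈ I ×ˢ J)
    (ℓ : ℕ) (hℓ : 1 ≤ ℓ)
    (hsmall : (2 : ℝ≥0∞) ^ ((ℓ : ℤ) + 1) * volume J ≤ 1)
    (Iℓ : Set ℝ) (hIℓ : IsDyadicInterval Iℓ) (hIℓI : Iℓ ⊆ I)
    (hIℓvol : volume Iℓ = (2 : ℝ≥0∞) ^ (-(ℓ : ℤ)) * volume I)
    (hIℓp : p.1 ∉ Iℓ)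
    (hIℓpar : ∃ Ihat : Set ℝ, IsDyadicInterval Ihat ∧ Iℓ ⊆ Ihat ∧
      volume Ihat = 2 * volume Iℓ ∧ p.1 ∈ Ihat)
    (Jup : Set ℝ) (hJup : IsDyadicInterval Jup) (hJJup : J ⊆ Jup)
    (hJupvol : volume Jup = (2 : ℝ≥0∞) ^ ((ℓ : ℤ) + 1) * volume J) :
    ∃ W H : Set ℝ,
      (IsDyadicInterval W ∧ IsDyadicInterval H ∧ W ×ˢ H ⊆ unitSq ∧
        volume (W ×ˢ H) = (2 : ℝ≥0∞) ^ (-(2 * (m : ℤ)) - 2) ∧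
        (∃ q ∈ P, q ∈ W ×ˢ H ∧ q ≠ p) ∧
        VertInt W H I J ∧ W ⊆ Iℓ ∧ volume W = 2⁻¹ * volume Iℓ) ∧
      H = Jup ∧
      ∀ W' H' : Set ℝ,
        (IsDyadicInterval W' ∧ IsDyadicInterval H' ∧ W' ×ˢ H' ⊆ unitSq ∧
          volume (W' ×ˢ H') = (2 : ℝ≥0∞) ^ (-(2 * (m : ℤ)) - 2) ∧
          (∃ q ∈ P, q ∈ W' ×ˢ H' ∧ q ≠ p) ∧
          VertInt W' H' I J ∧ W' ⊆ Iℓ ∧ volume W' = 2⁻¹ * volume Iℓ) →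
        W' ×ˢ H' = W ×ˢ H := by
  obtain ⟨kI, nI, rfl⟩ : ∃ k n : ℤ, I = dy k n := hI
  obtain ⟨kJ, nJ, rfl⟩ : ∃ k n : ℤ, J = dy k n := hJ
  obtain ⟨kL, nL, rfl⟩ : ∃ k n : ℤ, Iℓ = dy k n := hIℓ
  obtain ⟨kU, nU, rfl⟩ : ∃ k n : ℤ, Jup = dy k n := hJup

  have hinv : (2:ℝ≥0∞)^(-1:ℤ) = 2⁻¹ := by
    rw [ENNReal.zpow_neg, zpow_one]
  -- exponent arithmetic
  rw [vol_prod, dy_volume, dy_volume, ← two_zpow_add] at hRvol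
  have eIJ : nI + nJ = -(2 * (m:ℤ)) - 2 := two_zpow_inj hRvol
  rw [dy_volume, dy_volume, ← two_zpow_add] at hIℓvol
  have eL : nL = -(ℓ:ℤ) + nI := two_zpow_inj hIℓvol
  rw [dy_volume, dy_volume, ← two_zpow_add] at hJupvol
  have eU : nU = ((ℓ:ℤ) + 1) + nJ := two_zpow_inj hJupvol
  rw [dy_volume, ← two_zpow_add] at hsmall
  have eU0 : nU ≤ 0 := by
    have h := two_zpow_strictMono.le_iff_le.mp
      (le_of_le_of_eq hsmall (by norm_num : (1:ℝ≥0∞) = 2^(0:ℤ)))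
    omega
  -- the intervals inside [0,1)
  obtain ⟨yJ, hyJ⟩ := dy_nonempty kJ nJ
  obtain ⟨xI, hxI⟩ := dy_nonempty kI nI
  have hI01 : dy kI nI ⊆ Set.Ico (0:ℝ) 1 := fun x hx => (hRsub (Set.mk_mem_prod hx hyJ)).1
  have hJ01 : dy kJ nJ ⊆ Set.Ico (0:ℝ) 1 := fun y hy => (hRsub (Set.mk_mem_prod hxI hy)).2
  have hU01 : dy kU nU ⊆ Set.Ico (0:ℝ) 1 := by
    rw [unit_eq_dy]
    exact dy_nested (by omega) (hJJup hyJ) (by rw [← unit_eq_dy]; exact hJ01 hyJ)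
  -- apply hP1 to the double rectangle Iℓ × Jup
  obtain ⟨q, ⟨hqP, hqmem⟩, hquniq⟩ :=
    hP1 (dy kL nL ×ˢ dy kU nU) ⟨_, _, dy_isDyadic kL nL, dy_isDyadic kU nU, rfl⟩
      (Set.prod_mono (hIℓI.trans hI01) hU01)
      (by rw [vol_prod, dy_volume, dy_volume, ← two_zpow_add]; congr 1; omega)
  have hqp : q ≠ p := fun h => hIℓp (h ▸ hqmem.1)
  obtain ⟨kW, hqW, hWsub⟩ := dy_half hqmem.1
  -- J ⊊ Jup : a point of Jup outside J
  have hJne : ¬ (dy kU nU ⊆ dy kJ nJ) := by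
    intro hsub
    have heq : dy kU nU = dy kJ nJ := Set.Subset.antisymm hsub hJJup
    have : (2:ℝ≥0∞)^nU = 2^nJ := by rw [← dy_volume kU nU, ← dy_volume kJ nJ, heq]
    have := two_zpow_inj this
    omega
  obtain ⟨y0, hy0U, hy0J⟩ := Set.not_subset.mp hJne
  refine ⟨dy kW (nL - 1), dy kU nU,
    ⟨dy_isDyadic _ _, dy_isDyadic _ _,
      Set.prod_mono ((hWsub.trans hIℓI).trans hI01) hU01,
      by rw [vol_prod, dy_volume, dy_volume, ← two_zpow_add]; congr 1; omega,
      ⟨q, hqP, ⟨hqW, hqmem.2⟩, hqp⟩,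
      ⟨⟨(q.1, yJ), ⟨hqW, hJJup hyJ⟩, ⟨hIℓI (hWsub hqW), hyJ⟩⟩,
        fun hsub => hy0J (hsub (Set.mk_mem_prod hqW hy0U)).2,
        fun hsub => hIℓp (hWsub (hsub hpR).1),
        (Set.ssubset_iff_of_subset ((hWsub.trans hIℓI))).mpr
          ⟨p.1, hpR.1, fun h => hIℓp (hWsub h)⟩⟩,
      hWsub,
      by rw [dy_volume, dy_volume, show nL - 1 = -1 + nL by omega, two_zpow_add, hinv]⟩,
    rfl, ?_⟩
  -- uniqueness
  rintro W' H' ⟨hW'dy, hH'dy, hsub', hvol', ⟨q', hq'P, hq'mem, hq'p⟩, hVI', hW'L, hW'vol⟩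
  obtain ⟨kW', nW', rfl⟩ : ∃ k n : ℤ, W' = dy k n := hW'dy
  obtain ⟨kH', nH', rfl⟩ : ∃ k n : ℤ, H' = dy k n := hH'dy
  rw [dy_volume, dy_volume, ← hinv, ← two_zpow_add] at hW'vol
  have eW' : nW' = -1 + nL := two_zpow_inj hW'vol
  rw [vol_prod, dy_volume, dy_volume, ← two_zpow_add] at hvol'
  have eH' : nW' + nH' = -(2 * (m:ℤ)) - 2 := two_zpow_inj hvol'
  -- H' = Jup
  obtain ⟨z, ⟨hz1, hz2⟩, hz3, hz4⟩ := hVI'.1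
  have hzU : z.2 ∈ dy kU nU := hJJup hz4
  have hH'U : dy kH' nH' = dy kU nU :=
    Set.Subset.antisymm (dy_nested (by omega) hz2 hzU) (dy_nested (by omega) hzU hz2)
  -- q' = q
  have hq'in : q' ∈ dy kL nL ×ˢ dy kU nU :=
    ⟨hW'L hq'mem.1, hH'U ▸ hq'mem.2⟩
  have hq'q : q' = q := hquniq q' ⟨hq'P, hq'in⟩
  have hqW' : q.1 ∈ dy kW' nW' := hq'q ▸ hq'mem.1
  have hW'W : dy kW' nW' = dy kW (nL - 1) := by
    rw [show nW' = nL - 1 by omega] at hqW' ⊢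
    exact dy_eq_of_mem hqW' hqW
  rw [hW'W, hH'U]
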